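/- Let h : ℝ → ℝ be continuous and periodic with period T > 0, and let Δt > 0 be such that Δt/T is irrational. Then for every shift s ∈ ℝ and every continuous function g : ℝ → ℝ, the sample averages (1/N) ∑_{n=0}^{N-1} g(h(n·Δt + s)) converge, as N → ∞, to (1/T) ∫_0^T g(h(t)) dt. In particular the limiting sample statistics are the same for every shift s, i.e. h has sampling stationarity with respect to the sampling interval Δt. -/

import Mathlib

open Filter MeasureTheory Real

section SamplingAux

open AddCircle Submodule

section Key

variable {T : ℝ} [hT : Fact (0 < T)]

private lemma integrable_cm (F : C(AddCircle T, ℂ)) :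
    Integrable F (haarAddCircle) :=
  F.continuous.integrable_of_hasCompactSupport (isClosed_tsupport _).isCompact

private lemma avg_norm_le (Δt s : ℝ) (N : ℕ) (F : C(AddCircle T, ℂ)) :
    ‖(N : ℂ)⁻¹ * ∑ n ∈ Finset.range N, F ((↑((n:ℝ) * Δt + s)) : AddCircle T)‖ ≤ ‖F‖ := by
  rcases Nat.eq_zero_or_pos N with hN | hN
  · simp [hN, norm_nonneg]
  · have h1 : ‖∑ n ∈ Finset.range N, F ((↑((n:ℝ) * Δt + s)) : AddCircle T)‖ ≤ N * ‖F‖ := by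
      refine (norm_sum_le _ _).trans ?_
      calc ∑ n ∈ Finset.range N, ‖F ((↑((n:ℝ) * Δt + s)) : AddCircle T)‖
          ≤ ∑ n ∈ Finset.range N, ‖F‖ :=
            Finset.sum_le_sum fun i _ => ContinuousMap.norm_coe_le_norm F _
        _ = N * ‖F‖ := by simp [Finset.sum_const, mul_comm]
    have hN' : (0:ℝ) < N := by exact_mod_cast hN
    calc ‖(N : ℂ)⁻¹ * ∑ n ∈ Finset.range N, F ((↑((n:ℝ) * Δt + s)) : AddCircle T)‖
        = (N:ℝ)⁻¹ * ‖∑ n ∈ Finset.range N, F ((↑((n:ℝ) * Δt + s)) : AddCircle T)‖ := by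
          simp [norm_mul]
      _ ≤ (N:ℝ)⁻¹ * (N * ‖F‖) := by gcongr
      _ = ‖F‖ := by field_simp

private lemma fourier_tendsto (Δt : ℝ) (hirr : Irrational (Δt / T)) (s : ℝ) (m : ℤ)
    (hm : m ≠ 0) :
    Tendsto (fun N : ℕ => (N : ℂ)⁻¹ *
        ∑ n ∈ Finset.range N, fourier m ((↑((n:ℝ) * Δt + s)) : AddCircle T))
      atTop (nhds 0) := by
  have hT0 : T ≠ 0 := hT.out.ne'
  set θ : ℝ := 2 * π * m * Δt / T with hθdef
  set φ : ℝ := 2 * π * m * s / T with hφdef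
  set z : ℂ := Complex.exp (θ * Complex.I) with hzdef
  set c : ℂ := Complex.exp (φ * Complex.I) with hcdef
  have hterm : ∀ n : ℕ, fourier m ((↑((n:ℝ) * Δt + s)) : AddCircle T) = c * z ^ n := by
    intro n
    rw [fourier_coe_apply, hcdef, hzdef, ← Complex.exp_nat_mul, ← Complex.exp_add]
    congr 1
    push_cast [hθdef, hφdef]
    field_simp
    ring
  have hz1 : z ≠ 1 := by
    intro hz1
    rw [hzdef, Complex.exp_eq_one_iff] at hz1
    obtain ⟨k, hk⟩ := hz1
    have h2 : (θ:ℂ) * Complex.I = ((k:ℝ) * (2 * π) : ℝ) * Complex.I := by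
      rw [hk]; push_cast; ring
    have h3 : θ = (k:ℝ) * (2 * π) := by
      exact_mod_cast mul_right_cancel₀ Complex.I_ne_zero h2
    have h4 : (m:ℝ) * (Δt / T) = (k:ℝ) := by
      rw [hθdef] at h3
      have hπ : (π:ℝ) ≠ 0 := Real.pi_ne_zero
      field_simp at h3 ⊢
      have h3' : (2*π) * ((m:ℝ)*Δt) = (2*π) * ((k:ℝ)*T) := by linear_combination (2*π) * h3
      rw [mul_comm T]
      exact mul_left_cancel₀ (by positivity : (0:ℝ) < 2*π).ne' h3'
    exact (Int.not_irrational k) (h4 ▸ hirr.intCast_mul hm)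
  have hznorm : ‖z‖ = 1 := by
    rw [hzdef, Complex.norm_exp_ofReal_mul_I]
  have hcnorm : ‖c‖ = 1 := by
    rw [hcdef, Complex.norm_exp_ofReal_mul_I]
  rw [tendsto_zero_iff_norm_tendsto_zero]
  have hbound : ∀ N : ℕ,
      ‖(N : ℂ)⁻¹ * ∑ n ∈ Finset.range N, fourier m ((↑((n:ℝ) * Δt + s)) : AddCircle T)‖
        ≤ (2 / ‖z - 1‖) * (N:ℝ)⁻¹ := by
    intro N
    simp_rw [hterm, ← Finset.mul_sum, geom_sum_eq hz1]
    rw [norm_mul, norm_mul, norm_div, norm_inv, Complex.norm_natCast, hcnorm, one_mul]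
    have h5 : ‖z ^ N - 1‖ ≤ 2 := by
      calc ‖z ^ N - 1‖ ≤ ‖z ^ N‖ + ‖(1:ℂ)‖ := norm_sub_le _ _
        _ = 2 := by rw [norm_pow, hznorm]; norm_num
    have h6 : (0:ℝ) < ‖z - 1‖ := by
      rw [norm_pos_iff]; exact sub_ne_zero.mpr hz1
    rw [mul_comm]
    gcongr
  refine squeeze_zero (fun N => norm_nonneg _) hbound ?_
  simpa using (tendsto_inv_atTop_nhds_zero_nat (𝕜 := ℝ)).const_mul (2 / ‖z - 1‖)

private lemma integral_fourier_eq_zero (m : ℤ) (hm : m ≠ 0) :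
    ∫ x, fourier m x ∂(haarAddCircle (T := T)) = 0 := by
  have key : ∫ x, fourier m x ∂(haarAddCircle (T := T))
      = - ∫ x, fourier m x ∂(haarAddCircle (T := T)) := by
    conv_lhs => rw [← integral_add_right_eq_self (μ := haarAddCircle)
      (fun x => fourier m x) ((T / 2 / m : ℝ) : AddCircle T)]
    simp_rw [fourier_add_half_inv_index hm hT.out]
    exact integral_neg _
  linear_combination (1/2 : ℂ) * key

/-- Weyl equidistribution for a continuous test function on the circle. -/
private lemma key_equidistribution (Δt : ℝ) (hirr : Irrational (Δt / T)) (s : ℝ)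
    (F : C(AddCircle T, ℂ)) :
    Tendsto (fun N : ℕ => (N : ℂ)⁻¹ *
        ∑ n ∈ Finset.range N, F ((↑((n:ℝ) * Δt + s)) : AddCircle T))
      atTop (nhds (∫ x, F x ∂haarAddCircle)) := by
  -- the property holds on the span of the fourier monomials
  have hspan : ∀ G ∈ span ℂ (Set.range (@fourier T)),
      Tendsto (fun N : ℕ => (N : ℂ)⁻¹ *
          ∑ n ∈ Finset.range N, G ((↑((n:ℝ) * Δt + s)) : AddCircle T))
        atTop (nhds (∫ x, G x ∂haarAddCircle)) := by
    intro G hG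
    induction hG using span_induction with
    | mem G hGmem =>
      obtain ⟨m, rfl⟩ := hGmem
      rcases eq_or_ne m 0 with rfl | hm
      · have hint : ∫ x, fourier (0:ℤ) x ∂(haarAddCircle (T := T)) = 1 := by
          simp [fourier_zero]
        rw [hint]
        apply Tendsto.congr' (f₁ := fun _ : ℕ => (1:ℂ))
        · filter_upwards [eventually_ge_atTop 1] with N hN
          have hN0 : (N:ℂ) ≠ 0 := Nat.cast_ne_zero.mpr (by omega)
          simp [fourier_zero, Finset.sum_const, hN0]
        · exact tendsto_const_nhds
      · rw [integral_fourier_eq_zero m hm]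
        exact fourier_tendsto Δt hirr s m hm
    | zero => simp only [Finset.sum_const, ContinuousMap.zero_apply, smul_zero, mul_zero, ContinuousMap.coe_zero, Pi.zero_apply, integral_zero]; exact (tendsto_const_nhds : Tendsto (fun _ : ℕ => (0:ℂ)) atTop _)
    | add G H hGm hHm hGt hHt =>
      have : ∫ x, (G + H) x ∂(haarAddCircle (T := T))
          = (∫ x, G x ∂haarAddCircle) + ∫ x, H x ∂haarAddCircle := by
        simp_rw [ContinuousMap.add_apply]
        exact integral_add (integrable_cm G) (integrable_cm H)
      rw [this]
      have := hGt.add hHt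
      apply this.congr
      intro N
      simp [ContinuousMap.add_apply, Finset.sum_add_distrib, mul_add]
    | smul a G hGm hGt =>
      have : ∫ x, (a • G) x ∂(haarAddCircle (T := T)) = a * ∫ x, G x ∂haarAddCircle := by
        simp_rw [ContinuousMap.smul_apply, smul_eq_mul]
        rw [← smul_eq_mul, ← integral_smul]
        simp [smul_eq_mul]
      rw [this]
      have := hGt.const_mul a
      apply this.congr
      intro N
      simp only [ContinuousMap.smul_apply, smul_eq_mul, ← Finset.mul_sum]
      ring
  -- closure argument
  have hF : F ∈ closure ((span ℂ (Set.range (@fourier T)) :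
      Submodule ℂ C(AddCircle T, ℂ)) : Set C(AddCircle T, ℂ)) := by
    rw [← Submodule.topologicalClosure_coe, span_fourier_closure_eq_top]
    trivial
  rw [Metric.tendsto_atTop]
  intro ε hε
  obtain ⟨G, hGmem, hFG⟩ := Metric.mem_closure_iff.mp hF (ε/3) (by positivity)
  obtain ⟨N₀, hN₀⟩ := Metric.tendsto_atTop.mp (hspan G hGmem) (ε/3) (by positivity)
  refine ⟨N₀, fun N hN => ?_⟩
  have key1 : dist
      ((N:ℂ)⁻¹ * ∑ n ∈ Finset.range N, F ((↑((n:ℝ) * Δt + s)) : AddCircle T))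
      ((N:ℂ)⁻¹ * ∑ n ∈ Finset.range N, G ((↑((n:ℝ) * Δt + s)) : AddCircle T))
      ≤ dist F G := by
    rw [dist_eq_norm]
    have hdiff : (N:ℂ)⁻¹ * ∑ n ∈ Finset.range N, F ((↑((n:ℝ) * Δt + s)) : AddCircle T)
        - (N:ℂ)⁻¹ * ∑ n ∈ Finset.range N, G ((↑((n:ℝ) * Δt + s)) : AddCircle T)
        = (N:ℂ)⁻¹ * ∑ n ∈ Finset.range N, (F - G) ((↑((n:ℝ) * Δt + s)) : AddCircle T) := by
      simp [ContinuousMap.sub_apply, Finset.sum_sub_distrib, mul_sub]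
    rw [hdiff, dist_eq_norm]
    exact avg_norm_le Δt s N (F - G)
  have key2 : dist (∫ x, G x ∂(haarAddCircle (T := T))) (∫ x, F x ∂haarAddCircle)
      ≤ dist F G := by
    rw [dist_eq_norm, ← integral_sub (integrable_cm G) (integrable_cm F)]
    have hb : ∀ x : AddCircle T, ‖G x - F x‖ ≤ ‖G - F‖ := fun x => by
      simpa [ContinuousMap.sub_apply] using ContinuousMap.norm_coe_le_norm (G - F) x
    calc ‖∫ x, (G x - F x) ∂(haarAddCircle (T := T))‖
        ≤ ‖G - F‖ * (haarAddCircle (T := T) Set.univ).toReal :=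
          norm_integral_le_of_norm_le_const (Filter.Eventually.of_forall hb)
      _ = dist F G := by
          rw [measure_univ]
          simp [dist_eq_norm, norm_sub_rev]
  have key3 := hN₀ N hN
  calc dist ((N:ℂ)⁻¹ * ∑ n ∈ Finset.range N, F ((↑((n:ℝ) * Δt + s)) : AddCircle T))
        (∫ x, F x ∂(haarAddCircle (T := T)))
      ≤ dist ((N:ℂ)⁻¹ * ∑ n ∈ Finset.range N, F ((↑((n:ℝ) * Δt + s)) : AddCircle T))
          ((N:ℂ)⁻¹ * ∑ n ∈ Finset.range N, G ((↑((n:ℝ) * Δt + s)) : AddCircle T))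
        + dist ((N:ℂ)⁻¹ * ∑ n ∈ Finset.range N, G ((↑((n:ℝ) * Δt + s)) : AddCircle T))
            (∫ x, G x ∂(haarAddCircle (T := T)))
        + dist (∫ x, G x ∂(haarAddCircle (T := T))) (∫ x, F x ∂(haarAddCircle (T := T))) :=
        dist_triangle4 _ _ _ _
    _ < ε := by linarith

end Key


end SamplingAux

open AddCircle Submodule

/-- A continuous periodic signal has sampling stationarity with respect to any
sampling interval incommensurate with its period: for every shift `s` and every
continuous test function `g`, the sample averages converge to the waveform average
`(1/T) ∫_0^T g (h t) dt`, independently of `s`. -/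
theorem sampling_stationarity_of_periodic_incommensurate
    (h : ℝ → ℝ) (T : ℝ) (hT : 0 < T) (hcont : Continuous h)
    (hper : ∀ t : ℝ, h (t + T) = h t)
    (Δt : ℝ) (hΔt : 0 < Δt) (hirr : Irrational (Δt / T)) :
    ∀ s : ℝ, ∀ g : ℝ → ℝ, Continuous g →
      Tendsto
        (fun N : ℕ => (1 / (N : ℝ)) * ∑ n ∈ Finset.range N, g (h (n * Δt + s)))
        atTop
        (nhds ((1 / T) * ∫ t in (0:ℝ)..T, g (h t))) := by
  intro s g hg
  haveI : Fact (0 < T) := ⟨hT⟩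
  set f : ℝ → ℝ := fun t => g (h t) with hfdef
  have hfc : Continuous f := hg.comp hcont
  have hfper : Function.Periodic f T := fun t => congrArg g (hper t)
  have hFc : Continuous hfper.lift := hfc.quotient_liftOn' _
  set F : C(AddCircle T, ℂ) := ⟨fun x => ((hfper.lift x : ℝ) : ℂ),
    Complex.continuous_ofReal.comp hFc⟩ with hFdef
  have hkey := key_equidistribution Δt hirr s F
  -- identify the limit
  have h1 : ∫ a in (0:ℝ)..(0+T), F ↑a = ∫ b, F b ∂(volume : Measure (AddCircle T)) :=
    AddCircle.intervalIntegral_preimage T 0 F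
  have h2 : ∫ b, F b ∂(volume : Measure (AddCircle T)) = T * ∫ b, F b ∂haarAddCircle := by
    rw [volume_eq_smul_haarAddCircle, integral_smul_measure,
      ENNReal.toReal_ofReal hT.le, Complex.real_smul]
  have h3 : ∫ a in (0:ℝ)..(0+T), F ↑a = (((∫ t in (0:ℝ)..T, f t) : ℝ) : ℂ) := by
    rw [zero_add]
    exact intervalIntegral.integral_ofReal
  have hlim : ∫ x, F x ∂(haarAddCircle (T := T))
      = (((1 / T) * ∫ t in (0:ℝ)..T, f t : ℝ) : ℂ) := by
    have hT0 : (T:ℂ) ≠ 0 := Complex.ofReal_ne_zero.mpr hT.ne'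
    have h4 : (T:ℂ) * ∫ b, F b ∂haarAddCircle = ((∫ t in (0:ℝ)..T, f t : ℝ) : ℂ) :=
      h2.symm.trans (h1.symm.trans h3)
    push_cast
    rw [← h4]
    field_simp
  rw [hlim] at hkey
  have hre := (Complex.continuous_re.tendsto _).comp hkey
  simp only [Function.comp_def, Complex.ofReal_re] at hre
  apply hre.congr
  intro N
  have : ((1 / (N:ℝ)) * ∑ n ∈ Finset.range N, g (h ((n:ℝ) * Δt + s)) : ℝ)
      = (((N : ℂ)⁻¹ * ∑ n ∈ Finset.range N, F ((↑((n:ℝ) * Δt + s)) : AddCircle T)).re) := by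
    have : ((N : ℂ)⁻¹ * ∑ n ∈ Finset.range N, F ((↑((n:ℝ) * Δt + s)) : AddCircle T))
        = (((1 / (N:ℝ)) * ∑ n ∈ Finset.range N, f ((n:ℝ) * Δt + s) : ℝ) : ℂ) := by
      push_cast
      rw [one_div]
      rfl
    rw [this, Complex.ofReal_re]
  rw [this]
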